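/- Let C be a binary code of length n = pc + f with an automorphism σ consisting of c cycles of length p (an odd prime) followed by f fixed points, and suppose dim C = n/2. If C is self-dual (with respect to the standard dot product), then the projection C_π = π(F_σ(C)) ⊆ F_2^(c+f) is a binary self-dual code of length c + f. -/

import Mathlib

open Finset

/-- Hamming weight of a binary vector. -/
def wt {ι : Type*} [Fintype ι] (v : ι → ZMod 2) : ℕ :=
  (Finset.univ.filter fun i => v i ≠ 0).card

/-- Dual of a binary code under the standard dot product. -/
def dualCode {ι : Type*} [Fintype ι] (C : Submodule (ZMod 2) (ι → ZMod 2)) :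
    Submodule (ZMod 2) (ι → ZMod 2) where
  carrier := {x | ∀ c ∈ C, ∑ i, x i * c i = 0}
  add_mem' := by
    intro a b ha hb c hc
    have := ha c hc; have := hb c hc
    simp only [Pi.add_apply, add_mul, Finset.sum_add_distrib]
    simp [ha c hc, hb c hc]
  zero_mem' := by intro c hc; simp
  smul_mem' := by
    intro r a ha c hc
    simp only [Pi.smul_apply, smul_eq_mul, mul_assoc, ← Finset.mul_sum]
    simp [ha c hc]

/-- Fixed subcode F_σ(C). -/
def fixedCode {ι : Type*} (σ : Equiv.Perm ι) (C : Submodule (ZMod 2) (ι → ZMod 2)) :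
    Submodule (ZMod 2) (ι → ZMod 2) where
  carrier := {v | v ∈ C ∧ v ∘ σ = v}
  add_mem' := by
    rintro a b ⟨ha, ha'⟩ ⟨hb, hb'⟩
    refine ⟨C.add_mem ha hb, ?_⟩
    funext i
    simpa using congrFun (congrArg₂ (· + ·) ha' hb') i
  zero_mem' := ⟨C.zero_mem, rfl⟩
  smul_mem' := by
    rintro r a ⟨ha, ha'⟩
    exact ⟨C.smul_mem r ha, by funext i; simpa using congrArg (r • ·) (congrFun ha' i)⟩

/-- Subcode E_σ(C): codewords with even weight on each cycle (and zero on fixed points). -/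
def evenCode {ι : Type*} (p : ℕ) (σ : Equiv.Perm ι) (C : Submodule (ZMod 2) (ι → ZMod 2)) :
    Submodule (ZMod 2) (ι → ZMod 2) where
  carrier := {v | v ∈ C ∧ ∀ i, ∑ k ∈ Finset.range p, v ((σ ^ k) i) = 0}
  add_mem' := by
    rintro a b ⟨ha, ha'⟩ ⟨hb, hb'⟩
    refine ⟨C.add_mem ha hb, fun i => ?_⟩
    simp [Finset.sum_add_distrib, ha' i, hb' i]
  zero_mem' := ⟨C.zero_mem, by simp⟩
  smul_mem' := by
    rintro r a ⟨ha, ha'⟩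
    refine ⟨C.smul_mem r ha, fun i => ?_⟩
    simp only [Pi.smul_apply, smul_eq_mul]
    rw [← Finset.mul_sum, ha' i, mul_zero]

/-- Coordinate index set for an automorphism of type p-(c,f): `c` cycles of
length `p` followed by `f` fixed points. -/
abbrev Idx (p c f : ℕ) : Type := (Fin c × Fin p) ⊕ Fin f

/-- The standard permutation with `c` cycles of length `p` and `f` fixed points. -/
def stdPerm (p c f : ℕ) : Equiv.Perm (Idx p c f) :=
  Equiv.sumCongr (Equiv.prodCongr (Equiv.refl (Fin c)) (finRotate p)) (Equiv.refl (Fin f))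

/-- The projection π recording one bit per cycle and the fixed-point bits. -/
def proj (p c f : ℕ) [NeZero p] :
    (Idx p c f → ZMod 2) →ₗ[ZMod 2] ((Fin c ⊕ Fin f) → ZMod 2) where
  toFun v := Sum.elim (fun j => v (Sum.inl (j, 0))) (fun l => v (Sum.inr l))
  map_add' := by intro a b; funext i; cases i <;> simp
  map_smul' := by intro r a; funext i; cases i <;> simp

private lemma exists_succ (p : ℕ) [NeZero p] : ∃ n, p = n + 1 :=
  ⟨p - 1, (Nat.succ_pred_eq_of_pos (Nat.pos_of_ne_zero (NeZero.ne p))).symm⟩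

private lemma fixed_pow {ι : Type*} {σ : Equiv.Perm ι} {u : ι → ZMod 2}
    (h : u ∘ σ = u) (k : ℕ) : ∀ i, u ((σ ^ k) i) = u i := by
  induction k with
  | zero => intro i; simp
  | succ k ih =>
    intro i
    rw [pow_succ, Equiv.Perm.mul_apply]
    exact (ih (σ i)).trans (congrFun h i)

open Fin.NatCast in
private lemma fixed_const {p c f : ℕ} [NeZero p] {u : Idx p c f → ZMod 2}
    (h : u ∘ stdPerm p c f = u) (j : Fin c) (k : Fin p) :
    u (Sum.inl (j, k)) = u (Sum.inl (j, 0)) := by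
  obtain ⟨n, rfl⟩ := exists_succ p
  have hstep : ∀ i : Fin (n + 1), u (Sum.inl (j, i + 1)) = u (Sum.inl (j, i)) := by
    intro i
    have := congrFun h (Sum.inl (j, i))
    simpa [stdPerm] using this
  have key : ∀ m : ℕ, u (Sum.inl (j, (m : Fin (n + 1)))) = u (Sum.inl (j, 0)) := by
    intro m
    induction m with
    | zero => simp
    | succ m ih => rw [Nat.cast_succ, hstep, ih]
  have := key k.val
  rwa [Fin.cast_val_eq_self] at this

private lemma odd_cast (p : ℕ) (hodd : Odd p) : (p : ZMod 2) = 1 := by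
  obtain ⟨m, rfl⟩ := hodd
  push_cast
  rw [show (2 : ZMod 2) = 0 from rfl]
  ring

private lemma inner_proj {p c f : ℕ} [NeZero p] (hodd : Odd p)
    {u v : Idx p c f → ZMod 2} (hu : u ∘ stdPerm p c f = u) (hv : v ∘ stdPerm p c f = v) :
    ∑ i, u i * v i = ∑ i, proj p c f u i * proj p c f v i := by
  rw [Fintype.sum_sum_type, Fintype.sum_sum_type, Fintype.sum_prod_type]
  have h1 : ∀ j : Fin c, ∑ k : Fin p, u (Sum.inl (j, k)) * v (Sum.inl (j, k))
      = u (Sum.inl (j, 0)) * v (Sum.inl (j, 0)) := by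
    intro j
    have : ∀ k : Fin p, u (Sum.inl (j, k)) * v (Sum.inl (j, k))
        = u (Sum.inl (j, 0)) * v (Sum.inl (j, 0)) := fun k => by
      rw [fixed_const hu, fixed_const hv]
    rw [Finset.sum_congr rfl fun k _ => this k]
    simp [Finset.sum_const, nsmul_eq_mul, odd_cast p hodd]
  simp only [h1]
  rfl

private lemma stdPerm_pow_inr {p c f : ℕ} (k : ℕ) (l : Fin f) :
    ((stdPerm p c f) ^ k) (Sum.inr l) = Sum.inr l := by
  induction k with
  | zero => simp
  | succ k ih => rw [pow_succ, Equiv.Perm.mul_apply, show stdPerm p c f (Sum.inr l) = Sum.inr l from rfl, ih]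

private lemma stdPerm_pow_inl {p c f : ℕ} (k : ℕ) (j : Fin c) (i : Fin p) :
    ((stdPerm p c f) ^ k) (Sum.inl (j, i)) = Sum.inl (j, ((finRotate p) ^ k) i) := by
  induction k generalizing i with
  | zero => simp
  | succ k ih =>
    rw [pow_succ, pow_succ, Equiv.Perm.mul_apply, Equiv.Perm.mul_apply,
      show stdPerm p c f (Sum.inl (j, i)) = Sum.inl (j, finRotate p i) from rfl]
    exact ih (finRotate p i)

open Fin.NatCast in
private lemma stdPerm_pow_card {p c f : ℕ} [NeZero p] : (stdPerm p c f) ^ p = 1 := by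
  obtain ⟨n, hn⟩ := exists_succ p
  subst hn
  have hrot : ∀ (k : ℕ) (i : Fin (n + 1)), ((finRotate (n + 1)) ^ k) i = i + k := by
    intro k
    induction k with
    | zero => intro i; simp
    | succ k ih =>
      intro i
      rw [pow_succ, Equiv.Perm.mul_apply, finRotate_succ_apply, ih]
      push_cast
      abel
  ext x
  cases x with
  | inl jk =>
    rw [stdPerm_pow_inl, hrot]
    simp [Fin.natCast_self]
  | inr l => rw [stdPerm_pow_inr]; rfl

private lemma mem_dualCode {ι : Type*} [Fintype ι] {C : Submodule (ZMod 2) (ι → ZMod 2)}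
    {x : ι → ZMod 2} : x ∈ dualCode C ↔ ∀ c ∈ C, ∑ i, x i * c i = 0 := Iff.rfl

private lemma mem_fixedCode {ι : Type*} {σ : Equiv.Perm ι} {C : Submodule (ZMod 2) (ι → ZMod 2)}
    {v : ι → ZMod 2} : v ∈ fixedCode σ C ↔ v ∈ C ∧ v ∘ σ = v := Iff.rfl

/-- If a binary self-dual code of length `n = p*c + f` is invariant under the standard
permutation with `c` cycles of odd prime length `p` and `f` fixed points, then the
projection `C_π = π(F_σ(C))` is a binary self-dual code of length `c + f`. -/
theorem statement10 {p c f : ℕ} [NeZero p] (hp : p.Prime) (hodd : Odd p)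
    (C : Submodule (ZMod 2) (Idx p c f → ZMod 2))
    (hself : C = dualCode C)
    (haut : ∀ v, v ∈ C ↔ v ∘ (stdPerm p c f) ∈ C) :
    Submodule.map (proj p c f) (fixedCode (stdPerm p c f) C) =
      dualCode (Submodule.map (proj p c f) (fixedCode (stdPerm p c f) C)) := by
  apply le_antisymm
  · rintro _ ⟨u, hu, rfl⟩
    obtain ⟨huC, huF⟩ := mem_fixedCode.mp hu
    rw [mem_dualCode]
    rintro _ ⟨x, hx, rfl⟩
    obtain ⟨hxC, hxF⟩ := mem_fixedCode.mp hx
    rw [← inner_proj hodd huF hxF]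
    rw [hself] at huC
    exact mem_dualCode.mp huC x hxC
  · intro w hw
    rw [mem_dualCode] at hw
    set v : Idx p c f → ZMod 2 :=
      Sum.elim (fun jk => w (Sum.inl jk.1)) (fun l => w (Sum.inr l)) with hv
    have hvF : v ∘ stdPerm p c f = v := by
      funext i
      rcases i with ⟨j, k⟩ | l <;> rfl
    have hprojv : proj p c f v = w := by
      funext i
      cases i <;> rfl
    have hvC : v ∈ C := by
      rw [hself, mem_dualCode]
      intro x hx
      have hpowC : ∀ k : ℕ, (fun i => x ((stdPerm p c f ^ k) i)) ∈ C := by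
        intro k
        induction k with
        | zero => simpa using hx
        | succ k ih =>
          have h1 := (haut _).mp ih
          have h2 : ((fun i => x ((stdPerm p c f ^ k) i)) ∘ stdPerm p c f)
              = fun i => x ((stdPerm p c f ^ (k + 1)) i) := by
            funext i
            simp [pow_succ, Equiv.Perm.mul_apply, Function.comp]
          rwa [h2] at h1
      set T : Idx p c f → ZMod 2 :=
        fun i => ∑ k ∈ Finset.range p, x ((stdPerm p c f ^ k) i) with hT
      have hTC : T ∈ C := by
        have hsum : T = ∑ k ∈ Finset.range p, (fun i => x ((stdPerm p c f ^ k) i)) := by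
          funext i
          rw [Finset.sum_apply]
        rw [hsum]
        exact Submodule.sum_mem C fun k _ => hpowC k
      have hTF : T ∘ stdPerm p c f = T := by
        funext i
        show (∑ k ∈ Finset.range p, x ((stdPerm p c f ^ k) (stdPerm p c f i))) = _
        calc (∑ k ∈ Finset.range p, x ((stdPerm p c f ^ k) (stdPerm p c f i)))
            = ∑ k ∈ Finset.range p, x ((stdPerm p c f ^ (k + 1)) i) :=
              Finset.sum_congr rfl fun k _ => by
                rw [pow_succ, Equiv.Perm.mul_apply]
          _ = ∑ k ∈ Finset.range p, x ((stdPerm p c f ^ k) i) := by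
              have e1 := Finset.sum_range_succ' (fun k => x ((stdPerm p c f ^ k) i)) p
              have e2 := Finset.sum_range_succ (fun k => x ((stdPerm p c f ^ k) i)) p
              have e3 : x ((stdPerm p c f ^ p) i) = x ((stdPerm p c f ^ 0) i) := by
                rw [stdPerm_pow_card, pow_zero]
              have e4 := e1.symm.trans e2
              rw [e3, pow_zero] at e4
              exact add_right_cancel e4
      have key : ∑ i, v i * x i = ∑ i, v i * T i := by
        have hc : ∑ i, v i * T i
            = ∑ k ∈ Finset.range p, ∑ i, v i * x ((stdPerm p c f ^ k) i) := by
          simp_rw [hT, Finset.mul_sum]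
          rw [Finset.sum_comm]
        have h2 : ∀ k ∈ Finset.range p,
            ∑ i, v i * x ((stdPerm p c f ^ k) i) = ∑ i, v i * x i := by
          intro k _
          calc ∑ i, v i * x ((stdPerm p c f ^ k) i)
              = ∑ i, v ((stdPerm p c f ^ k) i) * x ((stdPerm p c f ^ k) i) :=
                Finset.sum_congr rfl fun i _ => by rw [fixed_pow hvF]
            _ = ∑ i, v i * x i := Equiv.sum_comp (stdPerm p c f ^ k) (fun i => v i * x i)
        rw [hc, Finset.sum_congr rfl h2, Finset.sum_const, Finset.card_range,
          nsmul_eq_mul, odd_cast p hodd, one_mul]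
      rw [key, inner_proj hodd hvF hTF, hprojv]
      exact hw _ ⟨T, mem_fixedCode.mpr ⟨hTC, hTF⟩, rfl⟩
    exact ⟨v, mem_fixedCode.mpr ⟨hvC, hvF⟩, hprojv⟩
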